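/- Let z* ≠ 0 minimize z ↦ (1/2)‖z − w‖₂² + λ₂‖z‖₂ + λ₁‖z‖₁ over ℝ^g, and let h be the soft-thresholding of w with threshold λ₁, h_i = sgn(w_i)·max{0, |w_i| − λ₁}. Then ‖z*‖₂ = ‖h‖₂ − λ₂; in particular ‖h‖₂ > λ₂. -/

import Mathlib

noncomputable def l2norm {g : ℕ} (x : Fin g → ℝ) : ℝ := Real.sqrt (∑ i, x i ^ 2)
noncomputable def l1norm {g : ℕ} (x : Fin g → ℝ) : ℝ := ∑ i, |x i|


/-- 1-D optimality analysis. -/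
lemma one_dim (w1 lam1 lam2 c zi : ℝ) (hlam1 : 0 < lam1) (hlam2 : 0 < lam2)
    (hc : 0 ≤ c) (hNpos : 0 < Real.sqrt (zi ^ 2 + c))
    (hmin : ∀ s : ℝ, (1/2) * (zi - w1) ^ 2 + lam2 * Real.sqrt (zi ^ 2 + c) + lam1 * |zi|
      ≤ (1/2) * (s - w1) ^ 2 + lam2 * Real.sqrt (s ^ 2 + c) + lam1 * |s|) :
    (1 + lam2 / Real.sqrt (zi ^ 2 + c)) * zi = Real.sign w1 * max 0 (|w1| - lam1) := by
  set N := Real.sqrt (zi ^ 2 + c) with hN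
  have hNsq : N ^ 2 = zi ^ 2 + c := Real.sq_sqrt (by positivity)
  clear_value N
  have hNne : N ≠ 0 := ne_of_gt hNpos
  have ht : 0 < 1 + lam2 / N := by positivity
  by_cases hzi : zi = 0
  · -- case zi = 0 : show |w1| ≤ lam1
    subst hzi
    have hcN : N ^ 2 = c := by simpa using hNsq
    -- key bound for all s
    have key : ∀ s : ℝ, 0 ≤ (1/2) * s ^ 2 - s * w1 + lam2 * (s^2 / (2*N)) + lam1 * |s| := by
      intro s
      have h1 := hmin s
      have hsqrt : Real.sqrt (s ^ 2 + c) ≤ N + s^2/(2*N) := by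
        have h2 : s ^ 2 + c ≤ (N + s^2/(2*N)) ^ 2 := by
          have hNe : N ≠ 0 := ne_of_gt hNpos
          have : (N + s^2/(2*N))^2 = N^2 + s^2 + (s^2/(2*N))^2 := by
            field_simp
            ring
          nlinarith [sq_nonneg (s^2/(2*N))]
        calc Real.sqrt (s ^ 2 + c) ≤ Real.sqrt ((N + s^2/(2*N))^2) := Real.sqrt_le_sqrt h2
          _ = N + s^2/(2*N) := Real.sqrt_sq (by positivity)
      have h3 : lam2 * Real.sqrt (s^2 + c) ≤ lam2 * (N + s^2/(2*N)) :=
        mul_le_mul_of_nonneg_left hsqrt hlam2.le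
      simp only [abs_zero, mul_zero, add_zero] at h1
      nlinarith
    have hw1 : |w1| ≤ lam1 := by
      rw [abs_le]
      constructor
      · -- -lam1 ≤ w1 via s = -ε
        by_contra hlt
        push_neg at hlt
        set C : ℝ := 1/2 + lam2/(2*N) with hC
        have hCpos : 0 < C := by positivity
        clear_value C
        set ε : ℝ := (-lam1 - w1) / (2*C) with hε
        clear_value ε
        have hεpos : 0 < ε := by
          rw [hε]; apply div_pos (by linarith) (by linarith)
        have := key (-ε)
        rw [abs_neg, abs_of_pos hεpos] at this
        have hexp : (1/2) * (-ε) ^ 2 - (-ε) * w1 + lam2 * ((-ε)^2 / (2*N)) + lam1 * ε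
            = ε * (C * ε + w1 + lam1) := by
          rw [hC]; field_simp; ring
        rw [hexp] at this
        have h4 : 0 ≤ C * ε + w1 + lam1 := by
          by_contra h5; push_neg at h5
          nlinarith
        have hCε : C * ε = (-lam1 - w1) / 2 := by
          rw [hε]; field_simp
        linarith
      · by_contra hlt
        push_neg at hlt
        set C : ℝ := 1/2 + lam2/(2*N) with hC
        have hCpos : 0 < C := by positivity
        clear_value C
        set ε : ℝ := (w1 - lam1) / (2*C) with hε
        clear_value ε
        have hεpos : 0 < ε := by
          rw [hε]; apply div_pos (by linarith) (by linarith)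
        have := key ε
        rw [abs_of_pos hεpos] at this
        have hexp : (1/2) * ε ^ 2 - ε * w1 + lam2 * (ε^2 / (2*N)) + lam1 * ε
            = ε * (C * ε - w1 + lam1) := by
          rw [hC]; field_simp; ring
        rw [hexp] at this
        have h4 : 0 ≤ C * ε - w1 + lam1 := by
          by_contra h5; push_neg at h5
          nlinarith
        have hCε : C * ε = (w1 - lam1) / 2 := by
          rw [hε]; field_simp
        linarith
    have : max 0 (|w1| - lam1) = 0 := max_eq_left (by linarith)
    simp [this]
  · -- case zi ≠ 0 : derivative vanishes
    have hmin' : ∀ s : ℝ, (1/2) * (zi - w1) ^ 2 + lam2 * Real.sqrt (zi ^ 2 + c) + lam1 * |zi|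
        ≤ (1/2) * (s - w1) ^ 2 + lam2 * Real.sqrt (s ^ 2 + c) + lam1 * |s| := by
      intro s; rw [← hN]; exact hmin s
    have hlocal : IsLocalMin (fun s => (1/2) * (s - w1) ^ 2 + lam2 * Real.sqrt (s ^ 2 + c) + lam1 * |s|) zi :=
      Filter.Eventually.of_forall hmin'
    have hd1 : HasDerivAt (fun s : ℝ => (1/2) * (s - w1) ^ 2) (zi - w1) zi := by
      have := (((hasDerivAt_id zi).sub_const w1).pow 2).const_mul (1/2 : ℝ)
      refine this.congr_deriv ?_
      simp only [id_eq, pow_one, Nat.cast_ofNat]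
      ring
    have hne : zi ^ 2 + c ≠ 0 := by
      intro h0
      rw [hN, h0, Real.sqrt_zero] at hNpos; exact lt_irrefl 0 hNpos
    have hd2 : HasDerivAt (fun s : ℝ => lam2 * Real.sqrt (s ^ 2 + c)) (lam2 * (zi / N)) zi := by
      have hin : HasDerivAt (fun s : ℝ => s ^ 2 + c) (2 * zi) zi := by
        simpa using (hasDerivAt_pow 2 zi).add_const c
      have := (hin.sqrt hne).const_mul lam2
      refine this.congr_deriv ?_
      rw [← hN]
      field_simp
    have hd3 : HasDerivAt (fun s : ℝ => lam1 * |s|) (lam1 * (SignType.sign zi : ℝ)) zi :=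
      (hasDerivAt_abs hzi).const_mul lam1
    have hD := hlocal.hasDerivAt_eq_zero ((hd1.add hd2).add hd3)
    -- hD : zi - w1 + lam2 * (zi / N) + lam1 * sign zi = 0
    rcases lt_or_gt_of_ne hzi with hneg | hpos
    · have hs : (SignType.sign zi : ℝ) = -1 := by
        rw [sign_neg hneg]; simp
      rw [hs] at hD
      have heq : (1 + lam2 / N) * zi = w1 + lam1 := by
        field_simp at hD ⊢; linarith
      have hwneg : w1 + lam1 < 0 := by
        rw [← heq]
        exact mul_neg_of_pos_of_neg ht hneg
      have hw1 : w1 < 0 := by linarith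
      rw [Real.sign_of_neg hw1, abs_of_neg hw1]
      rw [max_eq_right (by linarith)]
      linarith [heq]
    · have hs : (SignType.sign zi : ℝ) = 1 := by
        rw [sign_pos hpos]; simp
      rw [hs] at hD
      have heq : (1 + lam2 / N) * zi = w1 - lam1 := by
        field_simp at hD ⊢; linarith
      have hwpos : 0 < w1 - lam1 := by
        rw [← heq]
        exact mul_pos ht hpos
      have hw1 : 0 < w1 := by linarith
      rw [Real.sign_of_pos hw1, abs_of_pos hw1]
      rw [max_eq_right (by linarith)]
      linarith [heq]
lemma update_sum {g : ℕ} (zstar : Fin g → ℝ) (i : Fin g) (G : Fin g → ℝ → ℝ) (s : ℝ) :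
    ∑ j, G j (Function.update zstar i s j)
      = G i s + ∑ j ∈ Finset.univ.erase i, G j (zstar j) := by
  rw [← Finset.add_sum_erase Finset.univ (fun j => G j (Function.update zstar i s j))
    (Finset.mem_univ i), Function.update_self]
  congr 1
  exact Finset.sum_congr rfl fun j hj => by
    rw [Function.update_of_ne (Finset.ne_of_mem_erase hj)]

/-- If a nonzero `zstar` minimizes the HiLasso proximal objective, then
`‖zstar‖₂ = ‖h‖₂ − λ₂`, where `h` is the soft-thresholding of `w`; in particular
`‖h‖₂ > λ₂`. -/
theorem hilasso_prox_nonzero_norm {g : ℕ} (w : Fin g → ℝ) (lam1 lam2 : ℝ)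
    (hlam1 : 0 < lam1) (hlam2 : 0 < lam2)
    (obj : (Fin g → ℝ) → ℝ)
    (hobj : obj = fun z => (1/2) * (∑ i, (z i - w i) ^ 2) + lam2 * l2norm z + lam1 * l1norm z)
    (h : Fin g → ℝ)
    (hh : h = fun i => Real.sign (w i) * max 0 (|w i| - lam1))
    (zstar : Fin g → ℝ) (hzne : zstar ≠ 0)
    (hmin : ∀ z : Fin g → ℝ, obj zstar ≤ obj z) :
    l2norm zstar = l2norm h - lam2 ∧ l2norm h > lam2 := by
  classical
  set N := l2norm zstar with hNdef
  have hNpos : 0 < N := by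
    rw [hNdef, l2norm, Real.sqrt_pos]
    obtain ⟨i, hi⟩ := Function.ne_iff.mp hzne
    exact Finset.sum_pos' (fun j _ => sq_nonneg _)
      ⟨i, Finset.mem_univ i, pow_two_pos_of_ne_zero hi⟩
  have key : ∀ i : Fin g, (1 + lam2 / N) * zstar i = h i := by
    intro i
    set c := ∑ j ∈ Finset.univ.erase i, zstar j ^ 2 with hcdef
    have hc : 0 ≤ c := Finset.sum_nonneg fun j _ => sq_nonneg _
    have hNi : Real.sqrt (zstar i ^ 2 + c) = N := by
      rw [hNdef, l2norm]
      congr 1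
      rw [hcdef]
      exact Finset.add_sum_erase Finset.univ (fun j => zstar j ^ 2) (Finset.mem_univ i)
    have e1 : ∀ s : ℝ, ∑ j, (Function.update zstar i s j - w j) ^ 2
        = (s - w i) ^ 2 + ∑ j ∈ Finset.univ.erase i, (zstar j - w j) ^ 2 := fun s => by
      simpa using update_sum zstar i (fun j t => (t - w j) ^ 2) s
    have e2 : ∀ s : ℝ, ∑ j, (Function.update zstar i s j) ^ 2
        = s ^ 2 + c := fun s => by
      rw [hcdef]
      simpa using update_sum zstar i (fun j t => t ^ 2) s
    have e3 : ∀ s : ℝ, ∑ j, |Function.update zstar i s j|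
        = |s| + ∑ j ∈ Finset.univ.erase i, |zstar j| := fun s => by
      simpa using update_sum zstar i (fun j t => |t|) s
    have hobj' : ∀ s : ℝ, obj (Function.update zstar i s)
        = ((1/2) * (s - w i) ^ 2 + lam2 * Real.sqrt (s ^ 2 + c) + lam1 * |s|)
          + ((1/2) * (∑ j ∈ Finset.univ.erase i, (zstar j - w j) ^ 2)
            + lam1 * (∑ j ∈ Finset.univ.erase i, |zstar j|)) := by
      intro s
      rw [hobj]
      simp only [l2norm, l1norm, e1 s, e2 s, e3 s]
      ring
    have hm : ∀ s : ℝ, (1/2) * (zstar i - w i) ^ 2 + lam2 * Real.sqrt (zstar i ^ 2 + c)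
          + lam1 * |zstar i|
        ≤ (1/2) * (s - w i) ^ 2 + lam2 * Real.sqrt (s ^ 2 + c) + lam1 * |s| := by
      intro s
      have h0 := hmin (Function.update zstar i s)
      have h1 : obj zstar = obj (Function.update zstar i (zstar i)) := by
        rw [Function.update_eq_self]
      rw [h1, hobj' s, hobj' (zstar i)] at h0
      linarith
    have := one_dim (w i) lam1 lam2 c (zstar i) hlam1 hlam2 hc
      (by rw [hNi]; exact hNpos) hm
    rw [hNi] at this
    rw [this, hh]
  have hl2h : l2norm h = (1 + lam2 / N) * N := by
    have ht : (0:ℝ) < 1 + lam2 / N := by positivity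
    rw [l2norm]
    have hs : ∑ j, h j ^ 2 = (1 + lam2 / N) ^ 2 * ∑ j, zstar j ^ 2 := by
      rw [Finset.mul_sum]
      exact Finset.sum_congr rfl fun j _ => by rw [← key j]; ring
    rw [hs, Real.sqrt_mul (sq_nonneg _), Real.sqrt_sq ht.le]
    rw [hNdef, l2norm]
  have htN : (1 + lam2 / N) * N = N + lam2 := by
    field_simp
  rw [htN] at hl2h
  constructor
  · rw [hl2h]; ring_nf
  · rw [hl2h]; linarith
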